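/- Let X be a normal space, Y a metric space, and Z₁, Z₂ closed subsets of Y, each X-avoidable. Then Z₁ ∪ Z₂ is X-avoidable. -/
import Mathlib


/-- `Z` is `X`-avoidable: every continuous map `X → Y` admits, within any continuous
positive error function, a continuous perturbation whose image misses `Z`. -/
def Avoidable (X : Type) [TopologicalSpace X] {Y : Type} [MetricSpace Y] (Z : Set Y) : Prop :=
  ∀ f : X → Y, Continuous f → ∀ ε : X → ℝ, Continuous ε → (∀ x, 0 < ε x) →
    ∃ g : X → Y, Continuous g ∧ ∀ x, g x ∉ Z ∧ dist (f x) (g x) < ε x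

theorem stmt_5 (X : Type) [TopologicalSpace X] [NormalSpace X]
    (Y : Type) [MetricSpace Y] (Z₁ Z₂ : Set Y)
    (hZ₁c : IsClosed Z₁) (hZ₂c : IsClosed Z₂)
    (hZ₁ : Avoidable X Z₁) (hZ₂ : Avoidable X Z₂) :
    Avoidable X (Z₁ ∪ Z₂) := by
  rcases Z₁.eq_empty_or_nonempty with hne | hne
  · subst hne
    intro f hf ε hε hεpos
    obtain ⟨g, hg, hgZ⟩ := hZ₂ f hf ε hε hεpos
    exact ⟨g, hg, fun x => ⟨by simp [(hgZ x).1], (hgZ x).2⟩⟩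
  intro f hf ε hε hεpos
  obtain ⟨g₁, hg₁, hg₁Z⟩ := hZ₁ f hf (fun x => ε x / 2) (hε.div_const 2)
    (fun x => by linarith [hεpos x])
  set δ : X → ℝ := fun x => min (ε x / 2) (Metric.infDist (g₁ x) Z₁) with hδ
  have hδc : Continuous δ := (hε.div_const 2).min ((Metric.continuous_infDist_pt Z₁).comp hg₁)
  have hδpos : ∀ x, 0 < δ x := fun x => lt_min (by linarith [hεpos x])
    ((hZ₁c.notMem_iff_infDist_pos hne).mp (hg₁Z x).1)
  obtain ⟨g₂, hg₂, hg₂Z⟩ := hZ₂ g₁ hg₁ δ hδc hδpos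
  refine ⟨g₂, hg₂, fun x => ⟨?_, ?_⟩⟩
  · rintro (h | h)
    · have : Metric.infDist (g₁ x) Z₁ ≤ dist (g₁ x) (g₂ x) := Metric.infDist_le_dist_of_mem h
      have := (hg₂Z x).2
      have : dist (g₁ x) (g₂ x) < Metric.infDist (g₁ x) Z₁ :=
        lt_of_lt_of_le (hg₂Z x).2 (min_le_right _ _)
      linarith [Metric.infDist_le_dist_of_mem (x := g₁ x) h]
    · exact (hg₂Z x).1 h
  · calc dist (f x) (g₂ x) ≤ dist (f x) (g₁ x) + dist (g₁ x) (g₂ x) := dist_triangle _ _ _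
      _ < ε x / 2 + ε x / 2 := by
          have := lt_of_lt_of_le (hg₂Z x).2 (min_le_left _ _)
          linarith [(hg₁Z x).2]
      _ = ε x := by ring
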